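/- Let θ₀ satisfy 0 < θ₀ < π, let S = {ξ ∈ ℂ : ξ ≠ 0 and |arg ξ| < θ₀}, let q : ℂ → ℂ be holomorphic on S, real-valued on (0,∞), with |q(ξ)| ≤ k(1+|ξ|)^(−γ) on S for some constants γ > 1, k > 0. Let α ∈ [0, π). For each z ∈ S with Im z < 0 define uₙ(·,z), vₙ(·,z) by u₀ ≡ 1, v₀ ≡ 0 and, for n ≥ 1, uₙ(ξ,z) = (i/(2z²)) ∫₀^∞ q(ξ+s/z)·(uₙ₋₁+vₙ₋₁)(ξ+s/z,z) ds and vₙ(ξ,z) = −(i/(2z²)) ∫₀^∞ q(ξ+s/z)·e^{2is}·(uₙ₋₁+vₙ₋₁)(ξ+s/z,z) ds, and set Ψ(z) = (cos α + i z sin α)·(1 + Σ_{n=1}^∞ (uₙ(0,z) + Z·vₙ(0,z))) with Z = (cos α − i z sin α)/(cos α + i z sin α). Then there exist real numbers R₁ > 0 and θ₁ with 0 < θ₁ < θ₀ such that Ψ(z) ≠ 0 for every z with |z| ≥ R₁ and −θ₁ < arg z < 0. -/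

import Mathlib

open Complex MeasureTheory Real Set

lemma my_re_gt {θ : ℝ} (hθ : θ ≤ π/2) {w : ℂ} (hw : w ≠ 0) (harg : |w.arg| < θ) :
    ‖w‖ * Real.cos θ < w.re := by
  have hw' : 0 < ‖w‖ := norm_pos_iff.mpr hw
  have h1 : Real.cos w.arg = w.re / ‖w‖ := Complex.cos_arg hw
  have h2 : Real.cos θ < Real.cos |w.arg| :=
    Real.cos_lt_cos_of_nonneg_of_le_pi (abs_nonneg _) (by linarith [Real.pi_pos]) harg
  rw [Real.cos_abs] at h2
  have : ‖w‖ * Real.cos θ < ‖w‖ * Real.cos w.arg :=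
    mul_lt_mul_of_pos_left h2 hw'
  rw [h1, mul_div_cancel₀ _ hw'.ne'] at this
  simpa using this

lemma my_arg_lt {θ : ℝ} (hθ0 : 0 < θ) (hθ : θ ≤ π/2) {w : ℂ} (hw : w ≠ 0)
    (h : ‖w‖ * Real.cos θ < w.re) : |w.arg| < θ := by
  by_contra hc
  push_neg at hc
  have h2 : Real.cos |w.arg| ≤ Real.cos θ :=
    Real.cos_le_cos_of_nonneg_of_le_pi hθ0.le (Complex.abs_arg_le_pi w) hc
  rw [Real.cos_abs] at h2
  have h1 : Real.cos w.arg = w.re / ‖w‖ := Complex.cos_arg hw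
  have hw' : 0 < ‖w‖ := norm_pos_iff.mpr hw
  rw [h1] at h2
  have : w.re ≤ ‖w‖ * Real.cos θ := by
    rw [div_le_iff₀ hw'] at h2; linarith [h2]
  linarith

lemma my_cone_add {θ : ℝ} (hθ0 : 0 < θ) (hθ : θ ≤ π/2) {ξ η : ℂ}
    (hξ : ξ = 0 ∨ (ξ ≠ 0 ∧ |ξ.arg| < θ)) (hη0 : η ≠ 0) (hηa : |η.arg| < θ) :
    (ξ + η) ≠ 0 ∧ |(ξ + η).arg| < θ := by
  have hcos : 0 ≤ Real.cos θ :=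
    Real.cos_nonneg_of_mem_Icc ⟨by linarith [Real.pi_pos], hθ⟩
  have key : ‖ξ + η‖ * Real.cos θ < (ξ + η).re := by
    have hη' := my_re_gt hθ hη0 hηa
    rcases hξ with rfl | ⟨hξ0, hξa⟩
    · simpa using hη'
    · have hξ' := my_re_gt hθ hξ0 hξa
      have htri : ‖ξ + η‖ ≤ ‖ξ‖ + ‖η‖ := norm_add_le _ _
      have : ‖ξ + η‖ * Real.cos θ ≤ (‖ξ‖ + ‖η‖) * Real.cos θ :=
        mul_le_mul_of_nonneg_right htri hcos
      simp only [Complex.add_re]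
      nlinarith
  have hne : ξ + η ≠ 0 := by
    intro h
    rw [h] at key
    simp at key
  exact ⟨hne, my_arg_lt hθ0 hθ hne key⟩

lemma my_int_aux {a γ : ℝ} (ha : 0 < a) (hγ : 1 < γ) :
    IntegrableOn (fun s : ℝ => (1 + a * s) ^ (-γ)) (Ioi 0) ∧
    ∫ s in Ioi (0:ℝ), (1 + a * s) ^ (-γ) ≤ (1 + 1/(γ-1)) / a := by
  have hbase : Integrable (fun x : ℝ => (1 + ‖x‖) ^ (-γ)) := by
    apply integrable_one_add_norm (E := ℝ)
    simpa using hγ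
  have hbase1 : IntegrableOn (fun t : ℝ => (1 + t) ^ (-γ)) (Ioi 0) := by
    apply (hbase.integrableOn (s := Ioi 0)).congr_fun _ measurableSet_Ioi
    intro t ht
    simp only [Real.norm_eq_abs, abs_of_pos (mem_Ioi.1 ht)]
  have hInt : IntegrableOn (fun s : ℝ => (1 + a * s) ^ (-γ)) (Ioi 0) := by
    have := (integrableOn_Ioi_comp_mul_left_iff (fun t : ℝ => (1 + t) ^ (-γ)) 0 ha).2
    simpa using this (by simpa using hbase1)
  refine ⟨hInt, ?_⟩
  have hch : (∫ s in Ioi (0:ℝ), (1 + a * s) ^ (-γ)) =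
      a⁻¹ • ∫ t in Ioi (a * 0), (1 + t) ^ (-γ) :=
    integral_comp_mul_left_Ioi (fun t : ℝ => (1 + t) ^ (-γ)) 0 ha
  rw [hch, mul_zero, smul_eq_mul]
  have hsplit : (∫ t in Ioi (0:ℝ), (1 + t) ^ (-γ)) ≤ 1 + 1/(γ-1) := by
    have hdisj : Disjoint (Ioc (0:ℝ) 1) (Ioi 1) := Ioc_disjoint_Ioi le_rfl
    have hunion : Ioc (0:ℝ) 1 ∪ Ioi 1 = Ioi 0 := Ioc_union_Ioi_eq_Ioi zero_le_one
    have hi1 : IntegrableOn (fun t : ℝ => (1 + t) ^ (-γ)) (Ioc 0 1) :=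
      hbase1.mono_set (by rw [← hunion]; exact subset_union_left)
    have hi2 : IntegrableOn (fun t : ℝ => (1 + t) ^ (-γ)) (Ioi 1) :=
      hbase1.mono_set (by rw [← hunion]; exact subset_union_right)
    have heq : (∫ t in Ioi (0:ℝ), (1 + t) ^ (-γ)) =
        (∫ t in Ioc (0:ℝ) 1, (1 + t) ^ (-γ)) + ∫ t in Ioi (1:ℝ), (1 + t) ^ (-γ) := by
      rw [← hunion, setIntegral_union hdisj measurableSet_Ioi hi1 hi2]
    rw [heq]
    have hb1 : (∫ t in Ioc (0:ℝ) 1, (1 + t) ^ (-γ)) ≤ 1 := by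
      have : (∫ t in Ioc (0:ℝ) 1, (1 + t) ^ (-γ)) ≤ ∫ _ in Ioc (0:ℝ) 1, (1:ℝ) := by
        apply integral_mono_of_nonneg
          ((ae_restrict_iff' measurableSet_Ioc).2 (ae_of_all _ fun t ht =>
            Real.rpow_nonneg (by linarith [ht.1]) _))
          (integrableOn_const (by simp) (by simp))
        refine (ae_restrict_iff' measurableSet_Ioc).2 (ae_of_all _ fun t ht => ?_)
        exact Real.rpow_le_one_of_one_le_of_nonpos (by linarith [ht.1]) (by linarith)
      have h2 : (∫ _ in Ioc (0:ℝ) 1, (1:ℝ)) = 1 := by simp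
      linarith
    have hb2 : (∫ t in Ioi (1:ℝ), (1 + t) ^ (-γ)) ≤ 1/(γ-1) := by
      have hmono : (∫ t in Ioi (1:ℝ), (1 + t) ^ (-γ)) ≤ ∫ t in Ioi (1:ℝ), t ^ (-γ) := by
        apply integral_mono_of_nonneg
          ((ae_restrict_iff' measurableSet_Ioi).2 (ae_of_all _ fun t ht =>
            Real.rpow_nonneg (by linarith [mem_Ioi.1 ht]) _))
          (integrableOn_Ioi_rpow_of_lt (by linarith) zero_lt_one)
        refine (ae_restrict_iff' measurableSet_Ioi).2 (ae_of_all _ fun t ht => ?_)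
        exact Real.rpow_le_rpow_of_nonpos (by linarith [mem_Ioi.1 ht]) (by linarith) (by linarith)
      have hval : (∫ t in Ioi (1:ℝ), t ^ (-γ)) = 1/(γ-1) := by
        rw [integral_Ioi_rpow_of_lt (by linarith) zero_lt_one]
        rw [Real.one_rpow]
        rw [div_eq_div_iff (by linarith : -γ + 1 ≠ 0) (by linarith : γ - 1 ≠ 0)]
        ring
      linarith [hmono, hval.le, hval.ge]
    linarith
  calc a⁻¹ * ∫ t in Ioi (0:ℝ), (1 + t) ^ (-γ) ≤ a⁻¹ * (1 + 1/(γ-1)) :=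
        mul_le_mul_of_nonneg_left hsplit (by positivity)
    _ = (1 + 1/(γ-1)) / a := by field_simp
set_option maxHeartbeats 1000000 in
/-- Corollary 3.2: there is a resonance-free sectorial region `|z| ≥ R₁`,
`−θ₁ < arg z < 0` in the unphysical sheet, i.e. the analytically continued
boundary function `Ψ(z)` has no zeros there. -/
theorem stmt_10
    (θ₀ γ k : ℝ) (hθ₀ : 0 < θ₀) (hθ₀' : θ₀ < π)
    (S : Set ℂ) (hS : S = {ξ : ℂ | ξ ≠ 0 ∧ |ξ.arg| < θ₀})
    (q : ℂ → ℂ) (hq : DifferentiableOn ℂ q S)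
    (hqreal : ∀ x : ℝ, 0 < x → (q x).im = 0)
    (hγ : 1 < γ) (hk : 0 < k)
    (hqbound : ∀ ξ ∈ S, ‖q ξ‖ ≤ k * (1 + ‖ξ‖) ^ (-γ))
    (α : ℝ) (hα0 : 0 ≤ α) (hαπ : α < π)
    (D : Set ℂ) (hD : D = {ξ : ℂ | 0 ≤ ξ.re ∧ (ξ ∈ S ∨ ξ = 0)})
    (u v : ℕ → ℂ → ℂ → ℂ)
    (hu0 : ∀ z ∈ S, z.im < 0 → ∀ ξ ∈ D, u 0 ξ z = 1)
    (hv0 : ∀ z ∈ S, z.im < 0 → ∀ ξ ∈ D, v 0 ξ z = 0)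
    (hu : ∀ z ∈ S, z.im < 0 → ∀ n : ℕ, ∀ ξ ∈ D, u (n + 1) ξ z =
      (Complex.I / (2 * z ^ 2)) *
        ∫ s in Ioi (0 : ℝ), q (ξ + s / z) *
          (u n (ξ + s / z) z + v n (ξ + s / z) z))
    (hv : ∀ z ∈ S, z.im < 0 → ∀ n : ℕ, ∀ ξ ∈ D, v (n + 1) ξ z =
      -(Complex.I / (2 * z ^ 2)) *
        ∫ s in Ioi (0 : ℝ), q (ξ + s / z) * Complex.exp (2 * Complex.I * s) *
          (u n (ξ + s / z) z + v n (ξ + s / z) z))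
    (Ψ : ℂ → ℂ)
    (hΨ : ∀ z : ℂ, Ψ z =
      ((Real.cos α : ℂ) + Complex.I * z * (Real.sin α : ℂ)) *
        (1 + ∑' n : ℕ, (u (n + 1) 0 z +
          (((Real.cos α : ℂ) - Complex.I * z * (Real.sin α : ℂ)) /
            ((Real.cos α : ℂ) + Complex.I * z * (Real.sin α : ℂ))) * v (n + 1) 0 z))) :
    ∃ R₁ θ₁ : ℝ, 0 < R₁ ∧ 0 < θ₁ ∧ θ₁ < θ₀ ∧
      ∀ z : ℂ, R₁ ≤ ‖z‖ → -θ₁ < z.arg → z.arg < 0 → Ψ z ≠ 0 := by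
  clear hq hqreal
  have hπ := Real.pi_pos
  have hmin : 0 < min θ₀ (π/2) := lt_min hθ₀ (by linarith)
  set θ₁ : ℝ := min θ₀ (π/2) / 2 with hθ₁def
  have hθ₁pos : 0 < θ₁ := by positivity
  have hθ₁pi2 : θ₁ < π/2 := by
    have : min θ₀ (π/2) ≤ π/2 := min_le_right _ _
    rw [hθ₁def]; linarith
  have hθ₁lt : θ₁ < θ₀ := by
    have h1 : min θ₀ (π/2) ≤ θ₀ := min_le_left _ _
    rw [hθ₁def]; linarith
  set c : ℝ := Real.cos θ₁ with hcdef
  have hcpos : 0 < c := Real.cos_pos_of_mem_Ioo ⟨by linarith, hθ₁pi2⟩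
  have hγ1 : 0 < γ - 1 := by linarith
  set K : ℝ := k * (1 + 1/(γ-1)) / c with hKdef
  have hKpos : 0 < K := by positivity
  set B : ℝ := if Real.sin α = 0 then 1 else 4 / Real.sin α with hBdef
  refine ⟨max (8*K+1) B, θ₁, lt_of_lt_of_le (by linarith) (le_max_left _ _), hθ₁pos, hθ₁lt, ?_⟩
  intro z hz hargl hargr
  have hz0 : z ≠ 0 := by
    intro h; rw [h, Complex.arg_zero] at hargr; exact lt_irrefl 0 hargr
  have hargabs : |z.arg| < θ₁ := abs_lt.2 ⟨by linarith, by linarith⟩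
  have hzS : z ∈ S := by rw [hS]; exact ⟨hz0, lt_trans hargabs hθ₁lt⟩
  have hzim : z.im < 0 := Complex.arg_neg_iff.1 hargr
  have hznorm : 0 < ‖z‖ := norm_pos_iff.2 hz0
  have hzlarge : 8*K+1 ≤ ‖z‖ := le_trans (le_max_left _ _) hz
  set r : ℝ := K / ‖z‖ with hrdef
  have hr0 : 0 < r := div_pos hKpos hznorm
  have hr8 : r ≤ 1/8 := by
    rw [hrdef, div_le_div_iff₀ hznorm (by norm_num)]
    linarith
  have hrlt1 : r < 1 := lt_of_le_of_lt hr8 (by norm_num)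
  have hzre : ‖z‖ * c < z.re := my_re_gt (by linarith) hz0 hargabs
  set a : ℝ := c / ‖z‖ with hadef
  have ha0 : 0 < a := div_pos hcpos hznorm
  have h0D : (0:ℂ) ∈ D := by rw [hD]; exact ⟨by simp, Or.inr rfl⟩
  -- membership lemma
  have hmem : ∀ ξ ∈ D, ∀ s : ℝ, 0 < s →
      (ξ + ↑s/z ∈ D ∧ ξ + ↑s/z ∈ S ∧ a * s ≤ (ξ + ↑s/z).re) := by
    intro ξ hξ s hs
    set η : ℂ := ↑s / z with hηdef
    have hη0 : η ≠ 0 := div_ne_zero (by exact_mod_cast hs.ne') hz0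
    have hηarg : η.arg = -z.arg := by
      rw [hηdef, div_eq_mul_inv, Complex.arg_real_mul _ hs, Complex.arg_inv,
        if_neg (by intro h; rw [h] at hargr; linarith)]
    have hηabs : |η.arg| < θ₁ := by rw [hηarg, abs_neg]; exact hargabs
    have hηre : a * s ≤ η.re := by
      have h1 : η.re = s * (z⁻¹).re := by
        rw [hηdef, div_eq_mul_inv, Complex.re_ofReal_mul]
      have h2 : (z⁻¹).re = z.re / Complex.normSq z := Complex.inv_re z
      have h3 : Complex.normSq z = ‖z‖^2 := by
        rw [Complex.normSq_eq_norm_sq]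
      have h4 : a ≤ (z⁻¹).re := by
        rw [h2, h3, hadef, div_le_div_iff₀ hznorm (by positivity)]
        nlinarith
      calc a * s = s * a := mul_comm _ _
        _ ≤ s * (z⁻¹).re := mul_le_mul_of_nonneg_left h4 hs.le
        _ = η.re := h1.symm
    have hξre : 0 ≤ ξ.re := by rw [hD] at hξ; exact hξ.1
    have hre : 0 < (ξ + η).re := by
      have h5 : 0 < η.re := lt_of_lt_of_le (by positivity) hηre
      simp only [Complex.add_re]; linarith
    have hsum_ne : ξ + η ≠ 0 := by
      intro h; rw [h] at hre; simp at hre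
    have hargsum : |(ξ + η).arg| < θ₀ := by
      rcases le_or_gt θ₀ (π/2) with hcase | hcase
      · have hξ' : ξ = 0 ∨ (ξ ≠ 0 ∧ |ξ.arg| < θ₀) := by
          rw [hD] at hξ
          rcases hξ.2 with hS' | h0
          · right; rw [hS] at hS'; exact hS'
          · left; exact h0
        exact (my_cone_add hθ₀ hcase hξ' hη0 (lt_trans hηabs (by linarith))).2
      · calc |(ξ+η).arg| < π/2 := Complex.abs_arg_lt_pi_div_two_iff.2 (Or.inl hre)
          _ < θ₀ := hcase
    have hSmem : ξ + η ∈ S := by rw [hS]; exact ⟨hsum_ne, hargsum⟩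
    refine ⟨by rw [hD]; exact ⟨hre.le, Or.inl hSmem⟩, hSmem, ?_⟩
    simp only [Complex.add_re]; linarith
  -- integral bound
  obtain ⟨hIa, hVa⟩ := my_int_aux ha0 hγ
  have key : ∀ n : ℕ, ∀ f : ℝ → ℂ,
      (∀ s : ℝ, 0 < s → ‖f s‖ ≤ (k*(2*r^n)) * (1 + a*s)^(-γ)) →
      ‖∫ s in Ioi (0:ℝ), f s‖ ≤ 2*K*‖z‖*r^n := by
    intro n f hf
    calc ‖∫ s in Ioi (0:ℝ), f s‖ ≤ ∫ s in Ioi (0:ℝ), ‖f s‖ := norm_integral_le_integral_norm _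
      _ ≤ ∫ s in Ioi (0:ℝ), (k*(2*r^n)) * (1 + a*s)^(-γ) :=
          integral_mono_of_nonneg (ae_of_all _ fun s => norm_nonneg _) (hIa.const_mul _)
            ((ae_restrict_iff' measurableSet_Ioi).2 (ae_of_all _ hf))
      _ = (k*(2*r^n)) * ∫ s in Ioi (0:ℝ), (1 + a*s)^(-γ) := integral_const_mul _ _
      _ ≤ (k*(2*r^n)) * ((1 + 1/(γ-1))/a) :=
          mul_le_mul_of_nonneg_left hVa (by positivity)
      _ = 2*K*‖z‖*r^n := by
          rw [hKdef, hadef]; field_simp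
  have hpre : ‖Complex.I / (2*z^2)‖ = 1/(2*‖z‖^2) := by
    rw [norm_div, Complex.norm_I, norm_mul, norm_pow]
    simp
  have hstep : ∀ x : ℝ, 1/(2*‖z‖^2)*(2*K*‖z‖*x) = x * r := by
    intro x
    rw [hrdef, mul_comm x (K / ‖z‖)]
    simp only [div_mul_eq_mul_div]
    rw [div_eq_div_iff (by positivity) hznorm.ne']
    ring
  -- inductive bound
  have hbound : ∀ n : ℕ, ∀ ξ ∈ D, ‖u n ξ z‖ ≤ r^n ∧ ‖v n ξ z‖ ≤ r^n := by
    intro n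
    induction n with
    | zero =>
      intro ξ hξ
      rw [hu0 z hzS hzim ξ hξ, hv0 z hzS hzim ξ hξ]
      simp
    | succ n ih =>
      intro ξ hξ
      have hqb : ∀ s : ℝ, 0 < s → ‖q (ξ + ↑s/z)‖ * ‖u n (ξ + ↑s/z) z + v n (ξ + ↑s/z) z‖
          ≤ (k*(2*r^n)) * (1 + a*s)^(-γ) := by
        intro s hs
        obtain ⟨hD', hS', hre'⟩ := hmem ξ hξ s hs
        obtain ⟨hu', hv'⟩ := ih (ξ + ↑s/z) hD'
        have hq' : ‖q (ξ + ↑s/z)‖ ≤ k * (1 + a*s)^(-γ) := by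
          calc ‖q (ξ + ↑s/z)‖ ≤ k * (1 + ‖ξ + ↑s/z‖)^(-γ) := hqbound _ hS'
            _ ≤ k * (1 + a*s)^(-γ) := by
              apply mul_le_mul_of_nonneg_left _ hk.le
              apply Real.rpow_le_rpow_of_nonpos (by positivity) _ (by linarith)
              have h6 : (ξ + ↑s/z).re ≤ ‖ξ + ↑s/z‖ := Complex.re_le_norm _
              linarith
        have huv : ‖u n (ξ + ↑s/z) z + v n (ξ + ↑s/z) z‖ ≤ 2*r^n :=
          le_trans (norm_add_le _ _) (by linarith)
        calc ‖q (ξ + ↑s/z)‖ * ‖u n (ξ + ↑s/z) z + v n (ξ + ↑s/z) z‖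
            ≤ (k * (1+a*s)^(-γ)) * (2*r^n) :=
              mul_le_mul hq' huv (norm_nonneg _) (by positivity)
          _ = (k*(2*r^n)) * ((1+a*s)^(-γ)) := by ring
      constructor
      · rw [hu z hzS hzim n ξ hξ, norm_mul, hpre]
        have h2 := key n (fun s : ℝ => q (ξ + ↑s/z) * (u n (ξ + ↑s/z) z + v n (ξ + ↑s/z) z))
          (fun s hs => by rw [norm_mul]; exact hqb s hs)
        calc 1/(2*‖z‖^2) * ‖∫ s in Ioi (0:ℝ), q (ξ + ↑s/z) * (u n (ξ + ↑s/z) z + v n (ξ + ↑s/z) z)‖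
            ≤ 1/(2*‖z‖^2) * (2*K*‖z‖*r^n) := mul_le_mul_of_nonneg_left h2 (by positivity)
          _ = r^(n+1) := by rw [pow_succ]; exact hstep (r^n)
      · rw [hv z hzS hzim n ξ hξ, norm_mul, norm_neg, hpre]
        have hexp : ∀ s : ℝ, ‖Complex.exp (2*Complex.I*(s:ℂ))‖ = 1 := by
          intro s
          rw [Complex.norm_exp]
          norm_num [Complex.mul_re]
        have h2 := key n (fun s : ℝ => q (ξ + ↑s/z) * Complex.exp (2*Complex.I*(s:ℂ)) *
            (u n (ξ + ↑s/z) z + v n (ξ + ↑s/z) z))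
          (fun s hs => by
            rw [norm_mul, norm_mul, hexp, mul_one]; exact hqb s hs)
        calc 1/(2*‖z‖^2) * ‖∫ s in Ioi (0:ℝ), q (ξ + ↑s/z) * Complex.exp (2*Complex.I*(s:ℂ)) *
              (u n (ξ + ↑s/z) z + v n (ξ + ↑s/z) z)‖
            ≤ 1/(2*‖z‖^2) * (2*K*‖z‖*r^n) := mul_le_mul_of_nonneg_left h2 (by positivity)
          _ = r^(n+1) := by rw [pow_succ]; exact hstep (r^n)
  -- the factor Z and denominator d
  have hΨz := hΨ z
  set d : ℂ := (Real.cos α : ℂ) + Complex.I * z * (Real.sin α : ℂ) with hddef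
  set Z : ℂ := ((Real.cos α : ℂ) - Complex.I * z * (Real.sin α : ℂ)) / d with hZdef
  have hdZ : d ≠ 0 ∧ ‖Z‖ ≤ 2 := by
    by_cases hsa : Real.sin α = 0
    · have hα : α = 0 :=
        (Real.sin_eq_zero_iff_of_lt_of_lt (by linarith) hαπ).1 hsa
      constructor
      · rw [hddef, hα]; simp
      · rw [hZdef, hddef, hα]; simp
    · have hα0' : 0 < α := lt_of_le_of_ne hα0 (fun h => hsa (by rw [← h]; exact Real.sin_zero))
      have hsapos : 0 < Real.sin α := Real.sin_pos_of_pos_of_lt_pi hα0' hαπ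
      have hB' : 4 / Real.sin α ≤ ‖z‖ := by
        have hBeq : B = 4 / Real.sin α := by rw [hBdef, if_neg hsa]
        calc 4 / Real.sin α = B := hBeq.symm
          _ ≤ max (8*K+1) B := le_max_right _ _
          _ ≤ ‖z‖ := hz
      have ht4 : 4 ≤ ‖z‖ * Real.sin α := by
        rw [div_le_iff₀ hsapos] at hB'; linarith
      have hIz : ‖Complex.I * z * (Real.sin α:ℂ)‖ = ‖z‖ * Real.sin α := by
        rw [norm_mul, norm_mul, Complex.norm_I, one_mul, Complex.norm_real,
          Real.norm_eq_abs, abs_of_pos hsapos]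
      have hcosn : ‖(Real.cos α : ℂ)‖ ≤ 1 := by
        rw [Complex.norm_real, Real.norm_eq_abs]; exact Real.abs_cos_le_one α
      have hden : ‖z‖*Real.sin α - 1 ≤ ‖d‖ := by
        have h1 : ‖Complex.I*z*(Real.sin α:ℂ)‖ ≤ ‖d‖ + 1 := by
          calc ‖Complex.I*z*(Real.sin α:ℂ)‖ = ‖d + (-(Real.cos α:ℂ))‖ := by
                rw [hddef]; congr 1; ring
            _ ≤ ‖d‖ + ‖(-(Real.cos α:ℂ))‖ := norm_add_le _ _
            _ ≤ ‖d‖ + 1 := by rw [norm_neg]; linarith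
        rw [hIz] at h1; linarith
      have hdpos : 0 < ‖d‖ := by linarith
      refine ⟨norm_pos_iff.1 hdpos, ?_⟩
      rw [hZdef, norm_div, div_le_iff₀ hdpos]
      have hnum : ‖(Real.cos α:ℂ) - Complex.I*z*(Real.sin α:ℂ)‖ ≤ 1 + ‖z‖*Real.sin α := by
        calc ‖(Real.cos α:ℂ) - Complex.I*z*(Real.sin α:ℂ)‖
            ≤ ‖(Real.cos α:ℂ)‖ + ‖Complex.I*z*(Real.sin α:ℂ)‖ := norm_sub_le _ _
          _ ≤ 1 + ‖z‖*Real.sin α := by rw [hIz]; linarith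
      linarith
  obtain ⟨hd0, hZ2⟩ := hdZ
  -- the series
  have hterm : ∀ n : ℕ, ‖u (n+1) 0 z + Z * v (n+1) 0 z‖ ≤ 3 * r^(n+1) := by
    intro n
    obtain ⟨h1, h2⟩ := hbound (n+1) 0 h0D
    calc ‖u (n+1) 0 z + Z * v (n+1) 0 z‖ ≤ ‖u (n+1) 0 z‖ + ‖Z‖ * ‖v (n+1) 0 z‖ :=
          le_trans (norm_add_le _ _) (by rw [norm_mul])
      _ ≤ r^(n+1) + 2 * r^(n+1) := by
          have h3 := mul_le_mul hZ2 h2 (norm_nonneg _) (by norm_num)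
          linarith
      _ = 3 * r^(n+1) := by ring
  have hgeo : Summable (fun n : ℕ => 3 * r^(n+1)) := by
    apply ((summable_geometric_of_lt_one hr0.le hrlt1).mul_left (3*r)).congr
    intro n; rw [pow_succ]; ring
  have hsummable : Summable (fun n : ℕ => ‖u (n+1) 0 z + Z * v (n+1) 0 z‖) :=
    Summable.of_nonneg_of_le (fun n => norm_nonneg _) hterm hgeo
  have htsum : ‖∑' n : ℕ, (u (n+1) 0 z + Z * v (n+1) 0 z)‖ ≤ 3*r/(1-r) := by
    calc ‖∑' n : ℕ, (u (n+1) 0 z + Z * v (n+1) 0 z)‖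
        ≤ ∑' n : ℕ, ‖u (n+1) 0 z + Z * v (n+1) 0 z‖ := norm_tsum_le_tsum_norm hsummable
      _ ≤ ∑' n : ℕ, 3*r^(n+1) := Summable.tsum_le_tsum hterm hsummable hgeo
      _ = (3*r) * ∑' n : ℕ, r^n := by
          rw [← tsum_mul_left]
          exact tsum_congr fun n => by rw [pow_succ]; ring
      _ = 3*r/(1-r) := by
          rw [tsum_geometric_of_lt_one hr0.le hrlt1, div_eq_mul_inv]
  have hlt1 : 3*r/(1-r) < 1 := by
    rw [div_lt_one (by linarith)]
    linarith
  have hne : (1 : ℂ) + ∑' n : ℕ, (u (n+1) 0 z + Z * v (n+1) 0 z) ≠ 0 := by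
    intro h
    have h2 : ∑' n : ℕ, (u (n+1) 0 z + Z * v (n+1) 0 z) = -1 := by linear_combination h
    rw [h2] at htsum
    simp only [norm_neg, norm_one] at htsum
    linarith
  rw [hΨz]
  exact mul_ne_zero hd0 hne
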